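/- Let q, a, b, c ∈ ℂ generic (q ≠ 0, qⁿ ≠ 1 for nonzero n, relevant q-shifted factorials nonzero). The continuous dual q-Hahn polynomial admits two terminating representations which agree: (ab, bc; q)_n b^{−n} ₃φ₂(q^{−n}, bz, b z^{−1}; ab, bc; q, q) = (ab, ac; q)_n a^{−n} ₃φ₂(q^{−n}, az, a z^{−1}; ab, ac; q, q) for all z ≠ 0. -/

import Mathlib

open Finset

/-- q-shifted factorial (a;q)_k -/
noncomputable def qPoch (a q : ℂ) (k : ℕ) : ℂ := ∏ i ∈ range k, (1 - a * q ^ i)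

lemma qPoch_zero (x q : ℂ) : qPoch x q 0 = 1 := by simp [qPoch]

lemma qPoch_succ (x q : ℂ) (k : ℕ) : qPoch x q (k+1) = qPoch x q k * (1 - x * q ^ k) :=
  Finset.prod_range_succ _ _

lemma qPoch_succ₂ (x q : ℂ) (m : ℕ) :
    qPoch x q (m+2) = qPoch x q m * (1 - x * q ^ m) * (1 - x * q ^ (m+1)) := by
  rw [show m+2 = m+1+1 from rfl, qPoch_succ, qPoch_succ]

lemma qPoch_factor_ne {x q : ℂ} {n : ℕ} (h : qPoch x q n ≠ 0) {i : ℕ} (hi : i < n) :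
    1 - x * q ^ i ≠ 0 := by
  rw [qPoch, Finset.prod_ne_zero_iff] at h
  exact h i (mem_range.2 hi)

lemma qPoch_ne_mono {x q : ℂ} {n : ℕ} (h : qPoch x q n ≠ 0) {k : ℕ} (hk : k ≤ n) :
    qPoch x q k ≠ 0 := by
  rw [qPoch, Finset.prod_ne_zero_iff] at h ⊢
  exact fun i hi => h i (mem_range.2 (lt_of_lt_of_le (mem_range.1 hi) hk))

lemma pow_succ_ne_one {q : ℂ} (hq1 : ∀ n : ℤ, n ≠ 0 → q ^ n ≠ 1) (k : ℕ) : q ^ (k+1) ≠ 1 := by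
  have h := hq1 ((k:ℤ)+1) (by omega)
  rwa [show ((k:ℤ)+1) = ((k+1 : ℕ) : ℤ) by push_cast; ring, zpow_natCast] at h

lemma one_sub_pow_ne {q : ℂ} (hq1 : ∀ n : ℤ, n ≠ 0 → q ^ n ≠ 1) (k : ℕ) :
    (1:ℂ) - q^(k+1) ≠ 0 :=
  sub_ne_zero_of_ne (Ne.symm (pow_succ_ne_one hq1 k))

lemma qPoch_q_ne {q : ℂ} (hq1 : ∀ n : ℤ, n ≠ 0 → q ^ n ≠ 1) (k : ℕ) : qPoch q q k ≠ 0 := by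
  rw [qPoch, Finset.prod_ne_zero_iff]
  intro i _
  have h : (1:ℂ) - q^(i+1) ≠ 0 := one_sub_pow_ne hq1 i
  rwa [pow_succ'] at h

lemma qPoch_inv_vanish {q : ℂ} (hq : q ≠ 0) {m k : ℕ} (h : m < k) :
    qPoch ((q^m)⁻¹) q k = 0 := by
  rw [qPoch]
  refine Finset.prod_eq_zero (mem_range.2 h) ?_
  rw [inv_mul_cancel₀ (pow_ne_zero m hq)]
  norm_num

lemma qPoch_inv_left {q : ℂ} (hq : q ≠ 0) (m k : ℕ) :
    qPoch ((q^(m+1))⁻¹) q (k+1) = (1 - (q^(m+1))⁻¹) * qPoch ((q^m)⁻¹) q k := by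
  rw [qPoch, qPoch, Finset.prod_range_succ', mul_comm]
  congr 1
  · simp
  · refine Finset.prod_congr rfl fun i _ => ?_
    congr 1
    field_simp
    ring

noncomputable def Phi (q a z : ℂ) (k : ℕ) : ℂ := qPoch (a*z) q k * qPoch (a*z⁻¹) q k

noncomputable def Dd (q a b c : ℂ) (k : ℕ) : ℂ := qPoch q q k * qPoch (a*b) q k * qPoch (a*c) q k

noncomputable def Sf (q a b c z : ℂ) (n : ℕ) : ℂ :=
  qPoch (a*b) q n * qPoch (a*c) q n * (a⁻¹)^n *
    ∑ k ∈ range (n+1), qPoch ((q^n)⁻¹) q k * Phi q a z k / Dd q a b c k * q^k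

noncomputable def Bc (q a b c : ℂ) (m : ℕ) : ℂ :=
  q^(m+1)*(a+b+c) + a*b*c*q^m - a*b*c*q^(2*m+2) - a*b*c*q^(2*m+1)

noncomputable def Cc (q a b c : ℂ) (m : ℕ) : ℂ :=
  (1-a*b*q^m)*(1-a*c*q^m)*(1-q^(m+1))*(1-b*c*q^m)

lemma Bc_symm (q a b c : ℂ) (m : ℕ) : Bc q b a c m = Bc q a b c m := by
  simp only [Bc]; ring

lemma Cc_symm (q a b c : ℂ) (m : ℕ) : Cc q b a c m = Cc q a b c m := by
  simp only [Cc]; ring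

lemma Phi_zero (q a z : ℂ) : Phi q a z 0 = 1 := by simp [Phi, qPoch]

lemma Dd_zero (q a b c : ℂ) : Dd q a b c 0 = 1 := by simp [Dd, qPoch]

lemma Phi_succ {z : ℂ} (hz : z ≠ 0) (q a : ℂ) (k : ℕ) :
    Phi q a z (k+1) = Phi q a z k * (1 - a*(z+z⁻¹)*q^k + a^2*(q^k)^2) := by
  simp only [Phi, qPoch_succ]
  field_simp
  ring

lemma Dd_succ (q a b c : ℂ) (k : ℕ) :
    Dd q a b c (k+1) = Dd q a b c k * ((1 - q*q^k)*(1 - a*b*q^k)*(1 - a*c*q^k)) := by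
  simp only [Dd, qPoch_succ]
  ring

lemma Sf_zero (q a b c z : ℂ) : Sf q a b c z 0 = 1 := by
  simp [Sf, qPoch, Phi, Dd]

lemma Sf_one (q a b c z : ℂ) (hq : q ≠ 0) (hq1 : ∀ n : ℤ, n ≠ 0 → q ^ n ≠ 1)
    (ha : a ≠ 0) (hz : z ≠ 0)
    (h1 : qPoch (a*b) q 1 ≠ 0) (h2 : qPoch (a*c) q 1 ≠ 0) :
    Sf q a b c z 1 = z + z⁻¹ - (a+b+c) + a*b*c := by
  have hq' : (1:ℂ) - q ≠ 0 := by
    have := one_sub_pow_ne hq1 0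
    rwa [pow_one] at this
  have h1' : (1:ℂ) - a*b ≠ 0 := by
    have := qPoch_factor_ne h1 (show 0 < 1 by omega)
    simpa using this
  have h2' : (1:ℂ) - a*c ≠ 0 := by
    have := qPoch_factor_ne h2 (show 0 < 1 by omega)
    simpa using this
  have hd : ((1:ℂ) - q)*(1 - a*b)*(1 - a*c) ≠ 0 := mul_ne_zero (mul_ne_zero hq' h1') h2'
  simp only [Sf, Phi, Dd, qPoch, Finset.sum_range_succ, Finset.sum_range_zero,
    Finset.prod_range_succ, Finset.prod_range_zero, pow_zero, pow_one, one_mul, mul_one, zero_add]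
  rw [div_mul_eq_mul_div, div_add_div _ _ one_ne_zero hd, mul_comm, div_mul_eq_mul_div,
    div_eq_iff (by simpa using hd)]
  field_simp
  ring

lemma qPoch_inv_step {q : ℂ} (hq : q ≠ 0) (m j : ℕ) :
    (1 - (q^(m+1))⁻¹) * qPoch ((q^m)⁻¹) q (j+1)
      = qPoch ((q^(m+1))⁻¹) q j * (1 - (q^(m+1))⁻¹ * q^j) * (1 - (q^(m+1))⁻¹ * q^(j+1)) := by
  have h1 : qPoch ((q^(m+1))⁻¹) q (j+1+1)
      = (1 - (q^(m+1))⁻¹) * qPoch ((q^m)⁻¹) q (j+1) := qPoch_inv_left hq m (j+1)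
  have h2 : qPoch ((q^(m+1))⁻¹) q (j+1+1)
      = qPoch ((q^(m+1))⁻¹) q j * (1 - (q^(m+1))⁻¹*q^j) * (1 - (q^(m+1))⁻¹*q^(j+1)) := by
    rw [qPoch_succ, qPoch_succ]
  exact h1.symm.trans h2

set_option maxHeartbeats 1000000 in
lemma cperk (a b c q K M D : ℂ) (hD : D ≠ 0) (ha : a ≠ 0) (hq : q ≠ 0) (hM : M ≠ 0)
    (h1 : (1:ℂ) - q*K ≠ 0) (h2 : (1:ℂ) - a*b*K ≠ 0) (h3 : (1:ℂ) - a*c*K ≠ 0) :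
    (1 - (M*q)⁻¹) * ((1-a*b*M)*(1-a*c*M)*a⁻¹*(1/(D*a)))
    = (1 - (M*q)⁻¹) * ((1-a*b*M)*(1-a*c*M)*a⁻¹*
          ((1-(M*q)⁻¹*K)*(1+a^2*(K*q)^2)/(D*((1-q*K)*(1-a*b*K)*(1-a*c*K))*a))
      - (M*q*(a+b+c) + a*b*c*M - a*b*c*(M*M*q*q) - a*b*c*(M*M*q)) *
          ((1-a*b*M)*(1-a*c*M)*a⁻¹*
            ((1-(M*q)⁻¹*K)/(D*((1-q*K)*(1-a*b*K)*(1-a*c*K)))*(K*q)))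
      - (1-a*b*M)*(1-a*b*(M*q))*(1-a*c*M)*(1-a*c*(M*q))*(a⁻¹*a⁻¹)*
          ((1-(M*q*q)⁻¹)/(D*((1-q*K)*(1-a*b*K)*(1-a*c*K)))*(K*q)))
      - ((1-a*b*M)*(1-a*c*M)*(1-M*q)*(1-b*c*M)) *
          ((1-(M*q)⁻¹*K)*(1-(M*q)⁻¹*(K*q))/(D*((1-q*K)*(1-a*b*K)*(1-a*c*K)))*(K*q)) := by
  have hMq : (M*q : ℂ) ≠ 0 := mul_ne_zero hM hq
  have hMqq : (M*q*q : ℂ) ≠ 0 := mul_ne_zero hMq hq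
  have hdf : D*((1-q*K)*(1-a*b*K)*(1-a*c*K)) ≠ 0 := mul_ne_zero hD (mul_ne_zero (mul_ne_zero h1 h2) h3)
  have hDa : D*a ≠ 0 := mul_ne_zero hD ha
  have hdfa : D*((1-q*K)*(1-a*b*K)*(1-a*c*K))*a ≠ 0 := mul_ne_zero hdf ha
  have hBig : D*((1-q*K)*(1-a*b*K)*(1-a*c*K))*a*a*(M*q)*(M*q)*(M*q*q) ≠ 0 := by
    refine mul_ne_zero (mul_ne_zero (mul_ne_zero (mul_ne_zero (mul_ne_zero hdf ha) ha) hMq) hMq) hMqq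
  have e1 : (1 - (M*q)⁻¹) * (M*q) = M*q - 1 := by
    rw [sub_mul, one_mul, inv_mul_cancel₀ hMq]
  have e2 : (1 - (M*q)⁻¹*K) * (M*q) = M*q - K := by
    rw [sub_mul, one_mul, mul_comm ((M*q)⁻¹) K, mul_assoc, inv_mul_cancel₀ hMq, mul_one]
  have e2' : (1 - (M*q)⁻¹*(K*q)) * (M*q) = M*q - K*q := by
    rw [sub_mul, one_mul, mul_comm ((M*q)⁻¹) (K*q), mul_assoc, inv_mul_cancel₀ hMq, mul_one]
  have e5 : (1 - (M*q*q)⁻¹) * (M*q*q) = M*q*q - 1 := by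
    rw [sub_mul, one_mul, inv_mul_cancel₀ hMqq]
  have e3 : a⁻¹ * a = 1 := inv_mul_cancel₀ ha
  have e41 : (1:ℂ)/(D*a) * (D*a) = 1 := div_mul_cancel₀ _ hDa
  have e42 : (1-(M*q)⁻¹*K)*(1+a^2*(K*q)^2)/(D*((1-q*K)*(1-a*b*K)*(1-a*c*K))*a) * (D*((1-q*K)*(1-a*b*K)*(1-a*c*K))*a) = (1-(M*q)⁻¹*K)*(1+a^2*(K*q)^2) := div_mul_cancel₀ _ hdfa
  have e43 : (1-(M*q)⁻¹*K)/(D*((1-q*K)*(1-a*b*K)*(1-a*c*K))) * (D*((1-q*K)*(1-a*b*K)*(1-a*c*K))) = (1-(M*q)⁻¹*K) := div_mul_cancel₀ _ hdf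
  have e44 : (1-(M*q*q)⁻¹)/(D*((1-q*K)*(1-a*b*K)*(1-a*c*K))) * (D*((1-q*K)*(1-a*b*K)*(1-a*c*K))) = (1-(M*q*q)⁻¹) := div_mul_cancel₀ _ hdf
  have e45 : (1-(M*q)⁻¹*K)*(1-(M*q)⁻¹*(K*q))/(D*((1-q*K)*(1-a*b*K)*(1-a*c*K))) * (D*((1-q*K)*(1-a*b*K)*(1-a*c*K))) = (1-(M*q)⁻¹*K)*(1-(M*q)⁻¹*(K*q)) := div_mul_cancel₀ _ hdf
  have t1 : ((1 - (M*q)⁻¹) * ((1-a*b*M)*(1-a*c*M)*a⁻¹*(1/(D*a)))) * (D*((1-q*K)*(1-a*b*K)*(1-a*c*K))*a*a*(M*q)*(M*q)*(M*q*q)) = (M*q-1)*(1-a*b*M)*(1-a*c*M)*((1-q*K)*(1-a*b*K)*(1-a*c*K))*(M*q)*(M*q*q) := by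
    linear_combination ((1 - (M*q)⁻¹)*((1-a*b*M)*(1-a*c*M)*a⁻¹)*(((1-q*K)*(1-a*b*K)*(1-a*c*K))*a*(M*q)*(M*q)*(M*q*q))) * e41
      + ((1 - (M*q)⁻¹)*((1-a*b*M)*(1-a*c*M))*(((1-q*K)*(1-a*b*K)*(1-a*c*K))*(M*q)*(M*q)*(M*q*q))) * e3
      + ((1-a*b*M)*(1-a*c*M)*((1-q*K)*(1-a*b*K)*(1-a*c*K))*(M*q)*(M*q*q)) * e1
  have t2 : ((1 - (M*q)⁻¹) * ((1-a*b*M)*(1-a*c*M)*a⁻¹*((1-(M*q)⁻¹*K)*(1+a^2*(K*q)^2)/(D*((1-q*K)*(1-a*b*K)*(1-a*c*K))*a)))) * (D*((1-q*K)*(1-a*b*K)*(1-a*c*K))*a*a*(M*q)*(M*q)*(M*q*q)) = (M*q-1)*(M*q-K)*(1-a*b*M)*(1-a*c*M)*(1+a^2*(K*q)^2)*(M*q*q) := by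
    linear_combination ((1 - (M*q)⁻¹) * ((1-a*b*M)*(1-a*c*M)*a⁻¹)*(M*q)*(M*q)*(M*q*q)*a) * e42
      + ((1 - (M*q)⁻¹) * ((1-a*b*M)*(1-a*c*M))*(M*q)*(M*q)*(M*q*q)*(1-(M*q)⁻¹*K)*(1+a^2*(K*q)^2)) * e3
      + ((1-a*b*M)*(1-a*c*M)*(1+a^2*(K*q)^2)*(M*q*q)*(M*q)*(1-(M*q)⁻¹*K)) * e1
      + ((1-a*b*M)*(1-a*c*M)*(1+a^2*(K*q)^2)*(M*q*q)*(M*q-1)) * e2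
  have t3 : ((1 - (M*q)⁻¹) * ((M*q*(a+b+c) + a*b*c*M - a*b*c*(M*M*q*q) - a*b*c*(M*M*q)) * ((1-a*b*M)*(1-a*c*M)*a⁻¹*((1-(M*q)⁻¹*K)/(D*((1-q*K)*(1-a*b*K)*(1-a*c*K)))*(K*q))))) * (D*((1-q*K)*(1-a*b*K)*(1-a*c*K))*a*a*(M*q)*(M*q)*(M*q*q)) = (M*q*(a+b+c) + a*b*c*M - a*b*c*(M*M*q*q) - a*b*c*(M*M*q))*(1-a*b*M)*(1-a*c*M)*(M*q-1)*(M*q-K)*(K*q)*a*(M*q*q) := by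
    linear_combination ((1 - (M*q)⁻¹)*(M*q*(a+b+c) + a*b*c*M - a*b*c*(M*M*q*q) - a*b*c*(M*M*q))*((1-a*b*M)*(1-a*c*M)*a⁻¹)*(K*q)*(a*a*(M*q)*(M*q)*(M*q*q))) * e43
      + ((1 - (M*q)⁻¹)*(M*q*(a+b+c) + a*b*c*M - a*b*c*(M*M*q*q) - a*b*c*(M*M*q))*((1-a*b*M)*(1-a*c*M))*(1-(M*q)⁻¹*K)*(K*q)*(a*(M*q)*(M*q)*(M*q*q))) * e3
      + ((M*q*(a+b+c) + a*b*c*M - a*b*c*(M*M*q*q) - a*b*c*(M*M*q))*(1-a*b*M)*(1-a*c*M)*(1-(M*q)⁻¹*K)*(K*q)*a*(M*q)*(M*q*q)) * e1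
      + ((M*q*(a+b+c) + a*b*c*M - a*b*c*(M*M*q*q) - a*b*c*(M*M*q))*(1-a*b*M)*(1-a*c*M)*(M*q-1)*(K*q)*a*(M*q*q)) * e2
  have t4 : ((1 - (M*q)⁻¹) * ((1-a*b*M)*(1-a*b*(M*q))*(1-a*c*M)*(1-a*c*(M*q))*(a⁻¹*a⁻¹)*((1-(M*q*q)⁻¹)/(D*((1-q*K)*(1-a*b*K)*(1-a*c*K)))*(K*q)))) * (D*((1-q*K)*(1-a*b*K)*(1-a*c*K))*a*a*(M*q)*(M*q)*(M*q*q)) = (1-a*b*M)*(1-a*b*(M*q))*(1-a*c*M)*(1-a*c*(M*q))*(M*q-1)*(M*q*q-1)*(K*q)*(M*q) := by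
    linear_combination ((1 - (M*q)⁻¹)*(1-a*b*M)*(1-a*b*(M*q))*(1-a*c*M)*(1-a*c*(M*q))*(a⁻¹*a⁻¹)*(K*q)*(a*a*(M*q)*(M*q)*(M*q*q))) * e44
      + ((1 - (M*q)⁻¹)*(1-a*b*M)*(1-a*b*(M*q))*(1-a*c*M)*(1-a*c*(M*q))*a⁻¹*(1-(M*q*q)⁻¹)*(K*q)*(a*(M*q)*(M*q)*(M*q*q))) * e3
      + ((1 - (M*q)⁻¹)*(1-a*b*M)*(1-a*b*(M*q))*(1-a*c*M)*(1-a*c*(M*q))*(1-(M*q*q)⁻¹)*(K*q)*((M*q)*(M*q)*(M*q*q))) * e3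
      + ((1-a*b*M)*(1-a*b*(M*q))*(1-a*c*M)*(1-a*c*(M*q))*(1-(M*q*q)⁻¹)*(K*q)*(M*q)*(M*q*q)) * e1
      + ((1-a*b*M)*(1-a*b*(M*q))*(1-a*c*M)*(1-a*c*(M*q))*(M*q-1)*(K*q)*(M*q)) * e5
  have t5 : (((1-a*b*M)*(1-a*c*M)*(1-M*q)*(1-b*c*M)) * ((1-(M*q)⁻¹*K)*(1-(M*q)⁻¹*(K*q))/(D*((1-q*K)*(1-a*b*K)*(1-a*c*K)))*(K*q))) * (D*((1-q*K)*(1-a*b*K)*(1-a*c*K))*a*a*(M*q)*(M*q)*(M*q*q)) = ((1-a*b*M)*(1-a*c*M)*(1-M*q)*(1-b*c*M))*(M*q-K)*(M*q-(K*q))*(K*q)*a*a*(M*q*q) := by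
    linear_combination (((1-a*b*M)*(1-a*c*M)*(1-M*q)*(1-b*c*M))*(K*q)*(a*a*(M*q)*(M*q)*(M*q*q))) * e45
      + (((1-a*b*M)*(1-a*c*M)*(1-M*q)*(1-b*c*M))*(1-(M*q)⁻¹*(K*q))*(K*q)*a*a*(M*q)*(M*q*q)) * e2
      + (((1-a*b*M)*(1-a*c*M)*(1-M*q)*(1-b*c*M))*(M*q-K)*(K*q)*a*a*(M*q*q)) * e2'
  apply mul_right_cancel₀ hBig
  linear_combination t1 - t2 + t3 + t4 + t5

set_option maxHeartbeats 8000000 in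
lemma perk2 (q a b c z : ℂ) (hq : q ≠ 0) (hq1 : ∀ n : ℤ, n ≠ 0 → q ^ n ≠ 1)
    (ha : a ≠ 0) (m j : ℕ) (hj : j < m+2)
    (hab : qPoch (a*b) q (m+2) ≠ 0) (hac : qPoch (a*c) q (m+2) ≠ 0) :
    (1 - (q^(m+1))⁻¹) * (qPoch (a*b) q (m+1) * qPoch (a*c) q (m+1) * (a⁻¹)^(m+1) *
        (qPoch ((q^(m+1))⁻¹) q j * Phi q a z (j+1) / (Dd q a b c j * a)))
    = (1 - (q^(m+1))⁻¹) * (qPoch (a*b) q (m+1) * qPoch (a*c) q (m+1) * (a⁻¹)^(m+1) *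
        (qPoch ((q^(m+1))⁻¹) q (j+1) * (1 + a^2*(q^(j+1))^2) * Phi q a z (j+1) / (Dd q a b c (j+1) * a))
      - Bc q a b c m * (qPoch (a*b) q (m+1) * qPoch (a*c) q (m+1) * (a⁻¹)^(m+1) *
          (qPoch ((q^(m+1))⁻¹) q (j+1) * Phi q a z (j+1) / Dd q a b c (j+1) * q^(j+1)))
      - qPoch (a*b) q (m+2) * qPoch (a*c) q (m+2) * (a⁻¹)^(m+2) *
          (qPoch ((q^(m+2))⁻¹) q (j+1) * Phi q a z (j+1) / Dd q a b c (j+1) * q^(j+1)))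
      - Cc q a b c m * (qPoch (a*b) q m * qPoch (a*c) q m * (a⁻¹)^m *
          (qPoch ((q^(m+1))⁻¹) q j * (1 - (q^(m+1))⁻¹*q^j) * (1 - (q^(m+1))⁻¹*q^(j+1))
            * Phi q a z (j+1) / Dd q a b c (j+1) * q^(j+1))) := by
  have hq1m : (1:ℂ) - q*q^j ≠ 0 := by
    have := one_sub_pow_ne hq1 j; rwa [pow_succ'] at this
  have habj : (1:ℂ) - a*b*q^j ≠ 0 := qPoch_factor_ne hab (by omega)
  have hacj : (1:ℂ) - a*c*q^j ≠ 0 := qPoch_factor_ne hac (by omega)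
  have hdj : Dd q a b c j ≠ 0 :=
    mul_ne_zero (mul_ne_zero (qPoch_q_ne hq1 j) (qPoch_ne_mono hab (by omega)))
      (qPoch_ne_mono hac (by omega))
  have hM : (q:ℂ)^m ≠ 0 := pow_ne_zero m hq
  rw [show qPoch ((q^(m+2))⁻¹) q (j+1)
      = (1 - (q^(m+2))⁻¹) * qPoch ((q^(m+1))⁻¹) q j from qPoch_inv_left hq (m+1) j]
  rw [qPoch_succ ((q^(m+1))⁻¹) q j, Dd_succ q a b c j,
    qPoch_succ₂ (a*b) q m, qPoch_succ₂ (a*c) q m, qPoch_succ (a*b) q m, qPoch_succ (a*c) q m]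
  simp only [Bc, Cc]
  rw [show ((q:ℂ)^(m+2)) = q^m*q*q by rw [pow_succ, pow_succ],
    show ((q:ℂ)^(m+1)) = q^m*q from pow_succ q m,
    show ((q:ℂ)^(j+1)) = q^j*q from pow_succ q j,
    show ((q:ℂ)^(2*m+2)) = q^m*q^m*q*q by rw [pow_succ, pow_succ, two_mul, pow_add],
    show ((q:ℂ)^(2*m+1)) = q^m*q^m*q by rw [pow_succ, two_mul, pow_add],
    show ((a⁻¹:ℂ)^(m+2)) = a⁻¹^m*a⁻¹*a⁻¹ by rw [pow_succ, pow_succ],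
    show ((a⁻¹:ℂ)^(m+1)) = a⁻¹^m*a⁻¹ from pow_succ a⁻¹ m]
  linear_combination (qPoch (a*b) q m * qPoch (a*c) q m * (a⁻¹:ℂ)^m *
      qPoch ((q^m*q)⁻¹) q j * Phi q a z (j+1)) *
    cperk a b c q (q^j) (q^m) (Dd q a b c j) hdj ha hq hM hq1m habj hacj

set_option maxHeartbeats 1000000 in
lemma perk (q a b c z : ℂ) (hq : q ≠ 0) (hq1 : ∀ n : ℤ, n ≠ 0 → q ^ n ≠ 1)
    (ha : a ≠ 0) (m j : ℕ) (hj : j < m+2)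
    (hab : qPoch (a*b) q (m+2) ≠ 0) (hac : qPoch (a*c) q (m+2) ≠ 0) :
    (1 - (q^(m+1))⁻¹) * (qPoch (a*b) q (m+1) * qPoch (a*c) q (m+1) * (a⁻¹)^(m+1) *
        (qPoch ((q^(m+1))⁻¹) q j * Phi q a z (j+1) / (Dd q a b c j * a)))
    = (1 - (q^(m+1))⁻¹) * (qPoch (a*b) q (m+1) * qPoch (a*c) q (m+1) * (a⁻¹)^(m+1) *
        (qPoch ((q^(m+1))⁻¹) q (j+1) * (1 + a^2*(q^(j+1))^2) * Phi q a z (j+1) / (Dd q a b c (j+1) * a))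
      - Bc q a b c m * (qPoch (a*b) q (m+1) * qPoch (a*c) q (m+1) * (a⁻¹)^(m+1) *
          (qPoch ((q^(m+1))⁻¹) q (j+1) * Phi q a z (j+1) / Dd q a b c (j+1) * q^(j+1)))
      - Cc q a b c m * (qPoch (a*b) q m * qPoch (a*c) q m * (a⁻¹)^m *
          (qPoch ((q^m)⁻¹) q (j+1) * Phi q a z (j+1) / Dd q a b c (j+1) * q^(j+1)))
      - qPoch (a*b) q (m+2) * qPoch (a*c) q (m+2) * (a⁻¹)^(m+2) *
          (qPoch ((q^(m+2))⁻¹) q (j+1) * Phi q a z (j+1) / Dd q a b c (j+1) * q^(j+1))) := by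
  have h0 := perk2 q a b c z hq hq1 ha m j hj hab hac
  have hu0 := qPoch_inv_step hq m j
  linear_combination h0 + Cc q a b c m * (qPoch (a*b) q m * qPoch (a*c) q m * (a⁻¹)^m *
    (Phi q a z (j+1) / Dd q a b c (j+1) * q^(j+1))) * hu0

set_option maxHeartbeats 1000000 in
lemma Srec (q a b c z : ℂ) (hq : q ≠ 0) (hq1 : ∀ n : ℤ, n ≠ 0 → q ^ n ≠ 1)
    (ha : a ≠ 0) (hz : z ≠ 0) (m : ℕ)
    (hab : qPoch (a*b) q (m+2) ≠ 0) (hac : qPoch (a*c) q (m+2) ≠ 0) :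
    Sf q a b c z (m+2)
      = (z + z⁻¹ - Bc q a b c m) * Sf q a b c z (m+1) - Cc q a b c m * Sf q a b c z m := by
  have hD : ∀ k, k ≤ m+2 → Dd q a b c k ≠ 0 := fun k hk =>
    mul_ne_zero (mul_ne_zero (qPoch_q_ne hq1 k) (qPoch_ne_mono hab hk)) (qPoch_ne_mono hac hk)
  have h1m : (1:ℂ) - (q^(m+1))⁻¹ ≠ 0 := by
    rw [sub_ne_zero]
    intro h
    exact pow_succ_ne_one hq1 m (by rw [← inv_inv (q^(m+1)), ← h, inv_one])
  have es1 : ∑ k ∈ Finset.range (m+1+1), qPoch ((q^(m+1))⁻¹) q k * Phi q a z k / Dd q a b c k * q^k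
      = ∑ k ∈ Finset.range (m+2+1), qPoch ((q^(m+1))⁻¹) q k * Phi q a z k / Dd q a b c k * q^k := by
    refine Finset.sum_subset (Finset.range_subset_range.2 (by omega)) fun k hk1 hk2 => ?_
    rw [qPoch_inv_vanish hq (show m+1 < k by
      simp only [Finset.mem_range] at hk1 hk2; omega)]
    simp
  have es0 : ∑ k ∈ Finset.range (m+1), qPoch ((q^m)⁻¹) q k * Phi q a z k / Dd q a b c k * q^k
      = ∑ k ∈ Finset.range (m+2+1), qPoch ((q^m)⁻¹) q k * Phi q a z k / Dd q a b c k * q^k := by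
    refine Finset.sum_subset (Finset.range_subset_range.2 (by omega)) fun k hk1 hk2 => ?_
    rw [qPoch_inv_vanish hq (show m < k by
      simp only [Finset.mem_range] at hk1 hk2; omega)]
    simp
  have hxsum : (z+z⁻¹) * ∑ k ∈ Finset.range (m+2+1),
        qPoch ((q^(m+1))⁻¹) q k * Phi q a z k / Dd q a b c k * q^k
      = (∑ k ∈ Finset.range (m+2+1),
          qPoch ((q^(m+1))⁻¹) q k * (1 + a^2*(q^k)^2) * Phi q a z k / (Dd q a b c k * a))
        - ∑ k ∈ Finset.range (m+2+1),
            qPoch ((q^(m+1))⁻¹) q k * Phi q a z (k+1) / (Dd q a b c k * a) := by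
    rw [Finset.mul_sum, ← Finset.sum_sub_distrib]
    refine Finset.sum_congr rfl fun k hk => ?_
    have hdk : Dd q a b c k ≠ 0 := hD k (by simp only [Finset.mem_range] at hk; omega)
    rw [Phi_succ hz q a k]
    field_simp [hdk, ha, hz]
    ring
  have hR0 : (qPoch (a*b) q (m+1) * qPoch (a*c) q (m+1) * (a⁻¹)^(m+1) *
          (qPoch ((q^(m+1))⁻¹) q 0 * (1 + a^2*((q:ℂ)^0)^2) * Phi q a z 0 / (Dd q a b c 0 * a))
        - Bc q a b c m * (qPoch (a*b) q (m+1) * qPoch (a*c) q (m+1) * (a⁻¹)^(m+1) *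
            (qPoch ((q^(m+1))⁻¹) q 0 * Phi q a z 0 / Dd q a b c 0 * q^0))
        - Cc q a b c m * (qPoch (a*b) q m * qPoch (a*c) q m * (a⁻¹)^m *
            (qPoch ((q^m)⁻¹) q 0 * Phi q a z 0 / Dd q a b c 0 * q^0))
        - qPoch (a*b) q (m+2) * qPoch (a*c) q (m+2) * (a⁻¹)^(m+2) *
            (qPoch ((q^(m+2))⁻¹) q 0 * Phi q a z 0 / Dd q a b c 0 * q^0)) = 0 := by
    simp only [qPoch, Finset.prod_range_zero, Phi, Dd, Finset.prod_range_succ, pow_zero]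
    simp only [Bc, Cc]
    field_simp
    rw [mul_zero, mul_eq_zero]
    right
    rw [show (1/a)^(m+1) = (1/a)^m*(1/a) from pow_succ _ _,
      show (1/a)^(m+2) = (1/a)^m*(1/a)*(1/a) by ring]
    field_simp
    ring
  have hmain : ∑ k ∈ Finset.range (m+2+1),
        (qPoch (a*b) q (m+1) * qPoch (a*c) q (m+1) * (a⁻¹)^(m+1) *
          (qPoch ((q^(m+1))⁻¹) q k * Phi q a z (k+1) / (Dd q a b c k * a)))
      = ∑ k ∈ Finset.range (m+2+1),
          (qPoch (a*b) q (m+1) * qPoch (a*c) q (m+1) * (a⁻¹)^(m+1) *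
              (qPoch ((q^(m+1))⁻¹) q k * (1 + a^2*(q^k)^2) * Phi q a z k / (Dd q a b c k * a))
            - Bc q a b c m * (qPoch (a*b) q (m+1) * qPoch (a*c) q (m+1) * (a⁻¹)^(m+1) *
                (qPoch ((q^(m+1))⁻¹) q k * Phi q a z k / Dd q a b c k * q^k))
            - Cc q a b c m * (qPoch (a*b) q m * qPoch (a*c) q m * (a⁻¹)^m *
                (qPoch ((q^m)⁻¹) q k * Phi q a z k / Dd q a b c k * q^k))
            - qPoch (a*b) q (m+2) * qPoch (a*c) q (m+2) * (a⁻¹)^(m+2) *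
                (qPoch ((q^(m+2))⁻¹) q k * Phi q a z k / Dd q a b c k * q^k)) := by
    rw [Finset.sum_range_succ]
    conv_rhs => rw [Finset.sum_range_succ']
    rw [show qPoch ((q^(m+1))⁻¹) q (m+2) = 0 from qPoch_inv_vanish hq (by omega)]
    rw [hR0]
    simp only [zero_mul, zero_div, mul_zero, add_zero]
    refine Finset.sum_congr rfl fun j hj => ?_
    have hjm : j < m+2 := Finset.mem_range.1 hj
    exact mul_left_cancel₀ h1m (perk q a b c z hq hq1 ha m j hjm hab hac)
  simp only [Sf]
  rw [es1, es0]
  simp only [Finset.sum_sub_distrib, ← Finset.mul_sum] at hmain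
  linear_combination hmain
    - (qPoch (a*b) q (m+1) * qPoch (a*c) q (m+1) * (a⁻¹)^(m+1)) * hxsum


lemma Sf_symm (q a b c z : ℂ) (hq : q ≠ 0) (hq1 : ∀ n : ℤ, n ≠ 0 → q ^ n ≠ 1)
    (ha : a ≠ 0) (hb : b ≠ 0) (hz : z ≠ 0) :
    ∀ n : ℕ, qPoch (a*b) q n ≠ 0 → qPoch (b*c) q n ≠ 0 → qPoch (a*c) q n ≠ 0 →
      Sf q b a c z n = Sf q a b c z n := by
  intro n
  induction n using Nat.twoStepInduction with
  | zero =>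
    intro _ _ _
    rw [Sf_zero, Sf_zero]
  | one =>
    intro h1 h2 h3
    rw [Sf_one q b a c z hq hq1 hb hz (by rwa [mul_comm] at h1) h2,
        Sf_one q a b c z hq hq1 ha hz h1 h3]
    ring
  | more m ih1 ih2 =>
    intro h1 h2 h3
    have hab1 : qPoch (a*b) q (m+1) ≠ 0 := qPoch_ne_mono h1 (by omega)
    have hbc1 : qPoch (b*c) q (m+1) ≠ 0 := qPoch_ne_mono h2 (by omega)
    have hac1 : qPoch (a*c) q (m+1) ≠ 0 := qPoch_ne_mono h3 (by omega)
    have hab0 : qPoch (a*b) q m ≠ 0 := qPoch_ne_mono h1 (by omega)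
    have hbc0 : qPoch (b*c) q m ≠ 0 := qPoch_ne_mono h2 (by omega)
    have hac0 : qPoch (a*c) q m ≠ 0 := qPoch_ne_mono h3 (by omega)
    rw [Srec q b a c z hq hq1 hb hz m (by rwa [mul_comm] at h1) h2,
        Srec q a b c z hq hq1 ha hz m h1 h3,
        Bc_symm, Cc_symm, ih2 hab1 hbc1 hac1, ih1 hab0 hbc0 hac0]

theorem cdqHahn_symmetry (q a b c : ℂ)
    (hq : q ≠ 0) (hq1 : ∀ n : ℤ, n ≠ 0 → q ^ n ≠ 1)
    (ha : a ≠ 0) (hb : b ≠ 0) (n : ℕ)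
    (hab : qPoch (a * b) q n ≠ 0) (hbc : qPoch (b * c) q n ≠ 0)
    (hac : qPoch (a * c) q n ≠ 0)
    (z : ℂ) (hz : z ≠ 0) :
    qPoch (a * b) q n * qPoch (b * c) q n * (b⁻¹) ^ n *
      ∑ k ∈ range (n + 1),
        qPoch (q ^ (-(n : ℤ))) q k * qPoch (b * z) q k * qPoch (b * z⁻¹) q k /
          (qPoch q q k * qPoch (a * b) q k * qPoch (b * c) q k) * q ^ k
    = qPoch (a * b) q n * qPoch (a * c) q n * (a⁻¹) ^ n *
      ∑ k ∈ range (n + 1),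
        qPoch (q ^ (-(n : ℤ))) q k * qPoch (a * z) q k * qPoch (a * z⁻¹) q k /
          (qPoch q q k * qPoch (a * b) q k * qPoch (a * c) q k) * q ^ k := by
  rw [show (q:ℂ)^(-(n:ℤ)) = (q^n)⁻¹ by rw [zpow_neg, zpow_natCast]]
  have key := Sf_symm q a b c z hq hq1 ha hb hz n hab hbc hac
  simp only [Sf, Phi, Dd] at key
  rw [show b*a = a*b from mul_comm b a] at key
  have e1 : (∑ k ∈ range (n+1),
        qPoch ((q^n)⁻¹) q k * qPoch (b*z) q k * qPoch (b*z⁻¹) q k /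
          (qPoch q q k * qPoch (a*b) q k * qPoch (b*c) q k) * q^k)
      = ∑ k ∈ range (n+1),
          qPoch ((q^n)⁻¹) q k * (qPoch (b*z) q k * qPoch (b*z⁻¹) q k) /
            (qPoch q q k * qPoch (a*b) q k * qPoch (b*c) q k) * q^k :=
    Finset.sum_congr rfl fun k _ => by ring
  have e2 : (∑ k ∈ range (n+1),
        qPoch ((q^n)⁻¹) q k * qPoch (a*z) q k * qPoch (a*z⁻¹) q k /
          (qPoch q q k * qPoch (a*b) q k * qPoch (a*c) q k) * q^k)
      = ∑ k ∈ range (n+1),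
          qPoch ((q^n)⁻¹) q k * (qPoch (a*z) q k * qPoch (a*z⁻¹) q k) /
            (qPoch q q k * qPoch (a*b) q k * qPoch (a*c) q k) * q^k :=
    Finset.sum_congr rfl fun k _ => by ring
  rw [e1, e2]
  exact key
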